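/- For all bounded linear operators A, B on a complex Hilbert space, sqrt( ‖ |A|² + |B|² ‖ + ‖ A*B + B*A ‖ ) ≤ sqrt( ‖A‖² + ‖B‖² + 2‖A*B‖ ) ≤ ‖A‖ + ‖B‖. -/

import Mathlib

variable {H : Type*} [NormedAddCommGroup H] [InnerProductSpace ℂ H] [CompleteSpace H]

/-- The numerical radius of a bounded linear operator. -/
noncomputable def numRadius (A : H →L[ℂ] H) : ℝ :=
  ⨆ x : {x : H // ‖x‖ = 1}, ‖(inner ℂ (A x) (x : H) : ℂ)‖

/-- The absolute value |A| = (A*A)^(1/2). -/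
noncomputable def absOp (A : H →L[ℂ] H) : H →L[ℂ] H :=
  CFC.sqrt (ContinuousLinearMap.adjoint A * A)

/-- Real powers of an operator via continuous functional calculus. -/
noncomputable def opRpow (T : H →L[ℂ] H) (r : ℝ) : H →L[ℂ] H :=
  cfc (fun t : ℝ => t ^ r) T

theorem stmt13 (A B : H →L[ℂ] H) :
    Real.sqrt (‖(absOp A)^2 + (absOp B)^2‖ +
        ‖ContinuousLinearMap.adjoint A * B + ContinuousLinearMap.adjoint B * A‖) ≤
      Real.sqrt (‖A‖^2 + ‖B‖^2 + 2 * ‖ContinuousLinearMap.adjoint A * B‖) ∧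
    Real.sqrt (‖A‖^2 + ‖B‖^2 + 2 * ‖ContinuousLinearMap.adjoint A * B‖) ≤ ‖A‖ + ‖B‖ := by
  have habsA : (absOp A)^2 = ContinuousLinearMap.adjoint A * A := by
    rw [absOp, CFC.sq_sqrt _ (by rw [← ContinuousLinearMap.star_eq_adjoint]; exact star_mul_self_nonneg A)]
  have habsB : (absOp B)^2 = ContinuousLinearMap.adjoint B * B := by
    rw [absOp, CFC.sq_sqrt _ (by rw [← ContinuousLinearMap.star_eq_adjoint]; exact star_mul_self_nonneg B)]
  have hBA : ‖ContinuousLinearMap.adjoint B * A‖ = ‖ContinuousLinearMap.adjoint A * B‖ := by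
    rw [← norm_star (ContinuousLinearMap.adjoint A * B)]
    simp [star_mul, ContinuousLinearMap.star_eq_adjoint]
  constructor
  · apply Real.sqrt_le_sqrt
    have h1 : ‖(absOp A)^2 + (absOp B)^2‖ ≤ ‖A‖^2 + ‖B‖^2 := by
      rw [habsA, habsB]
      refine (norm_add_le _ _).trans (add_le_add ?_ ?_)
      · calc ‖ContinuousLinearMap.adjoint A * A‖ ≤ ‖ContinuousLinearMap.adjoint A‖ * ‖A‖ :=
              norm_mul_le _ _
          _ = ‖A‖^2 := by rw [← ContinuousLinearMap.star_eq_adjoint, norm_star, sq]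
      · calc ‖ContinuousLinearMap.adjoint B * B‖ ≤ ‖ContinuousLinearMap.adjoint B‖ * ‖B‖ :=
              norm_mul_le _ _
          _ = ‖B‖^2 := by rw [← ContinuousLinearMap.star_eq_adjoint, norm_star, sq]
    have h2 : ‖ContinuousLinearMap.adjoint A * B + ContinuousLinearMap.adjoint B * A‖ ≤
        2 * ‖ContinuousLinearMap.adjoint A * B‖ := by
      calc _ ≤ ‖ContinuousLinearMap.adjoint A * B‖ + ‖ContinuousLinearMap.adjoint B * A‖ :=
            norm_add_le _ _
        _ = 2 * ‖ContinuousLinearMap.adjoint A * B‖ := by rw [hBA]; ring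
    linarith
  · rw [show ‖A‖ + ‖B‖ = Real.sqrt ((‖A‖ + ‖B‖)^2) from
      (Real.sqrt_sq (by positivity)).symm]
    apply Real.sqrt_le_sqrt
    have : ‖ContinuousLinearMap.adjoint A * B‖ ≤ ‖A‖ * ‖B‖ := by
      calc ‖ContinuousLinearMap.adjoint A * B‖ ≤ ‖ContinuousLinearMap.adjoint A‖ * ‖B‖ :=
            norm_mul_le _ _
        _ = ‖A‖ * ‖B‖ := by rw [← ContinuousLinearMap.star_eq_adjoint, norm_star]
    nlinarith
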